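/- Let R ⊆ [0,1]^E be an exact relaxation oracle for the multi-purchase hypergraph G = (V,E). Then the projection onto the (ρ,y)-coordinates of the set of tuples (ρ,y,z,x) in the Big-M system with x ∈ {0,1}^V equals the choice probability set C_G. (Proposition 4.) -/

import Mathlib

open Finset

/-- A vector is binary if each coordinate is 0 or 1. -/
def IsBinaryVec {α : Type*} (x : α → ℝ) : Prop := ∀ i, x i = 0 ∨ x i = 1

variable {N : ℕ}

/-- The denominator `D(x) = 1 + Σ_{c∈E} v_c ∏_{i∈c} x_i`. -/
noncomputable def Dx (E : Finset (Finset (Fin N))) (v : Finset (Fin N) → ℝ)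
    (x : Fin N → ℝ) : ℝ :=
  1 + ∑ c ∈ E, v c * ∏ i ∈ c, x i

/-- The choice probability set `C_G`. -/
def choiceSet (E : Finset (Finset (Fin N))) (v : Finset (Fin N) → ℝ) :
    Set (ℝ × ({e // e ∈ E} → ℝ)) :=
  {p | ∃ x : Fin N → ℝ, IsBinaryVec x ∧ p.1 = 1 / Dx E v x ∧
      ∀ e : {e // e ∈ E}, p.2 e = (∏ i ∈ e.1, x i) / Dx E v x}

/-- The monomial set `M_G`. -/
def monoSet (E : Finset (Finset (Fin N))) : Set ({e // e ∈ E} → ℝ) :=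
  {z | ∃ x : Fin N → ℝ, IsBinaryVec x ∧ ∀ e : {e // e ∈ E}, z e = ∏ i ∈ e.1, x i}

/-- An exact relaxation oracle: `R ⊆ [0,1]^E`, `M_G ⊆ R`, and every `z ∈ R` with binary
singleton coordinates is the corresponding monomial vector. -/
def IsExactOracle (E : Finset (Finset (Fin N)))
    (hsing : ∀ i : Fin N, ({i} : Finset (Fin N)) ∈ E)
    (R : Set ({e // e ∈ E} → ℝ)) : Prop :=
  (∀ z ∈ R, ∀ e : {e // e ∈ E}, z e ∈ Set.Icc (0 : ℝ) 1) ∧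
  monoSet E ⊆ R ∧
  (∀ z ∈ R, (∀ i : Fin N, z ⟨{i}, hsing i⟩ = 0 ∨ z ⟨{i}, hsing i⟩ = 1) →
    ∀ e : {e // e ∈ E}, z e = ∏ i ∈ e.1, z ⟨{i}, hsing i⟩)

/-- `L_i(ρ,y)`. -/
noncomputable def Lb (E : Finset (Finset (Fin N)))
    (hsing : ∀ i : Fin N, ({i} : Finset (Fin N)) ∈ E)
    (v : Finset (Fin N) → ℝ) (ρ : ℝ) (y : {e // e ∈ E} → ℝ) (i : Fin N) : ℝ :=
  y ⟨{i}, hsing i⟩ +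
    ∑ e ∈ E.attach, (if i ∈ e.1 then v e.1 * y e
      else v e.1 * max 0 (y ⟨{i}, hsing i⟩ + y e - ρ))

/-- `U_i(ρ,y)`. -/
noncomputable def Ub (E : Finset (Finset (Fin N)))
    (hsing : ∀ i : Fin N, ({i} : Finset (Fin N)) ∈ E)
    (v : Finset (Fin N) → ℝ) (ρ : ℝ) (y : {e // e ∈ E} → ℝ) (i : Fin N) : ℝ :=
  y ⟨{i}, hsing i⟩ +
    ∑ e ∈ E.attach, (if i ∈ e.1 then v e.1 * y e
      else v e.1 * min (y ⟨{i}, hsing i⟩) (y e))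

/-- The perspective system. -/
noncomputable def persSystem (E : Finset (Finset (Fin N)))
    (hsing : ∀ i : Fin N, ({i} : Finset (Fin N)) ∈ E)
    (v : Finset (Fin N) → ℝ) (R : Set ({e // e ∈ E} → ℝ)) :
    Set (ℝ × ({e // e ∈ E} → ℝ) × (Fin N → ℝ)) :=
  {p | 0 ≤ p.1 ∧ (∃ z ∈ R, p.2.1 = p.1 • z) ∧
      p.1 + ∑ e ∈ E.attach, v e.1 * p.2.1 e = 1 ∧
      ∀ i : Fin N, Lb E hsing v p.1 p.2.1 i ≤ p.2.2 i ∧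
        p.2.2 i ≤ Ub E hsing v p.1 p.2.1 i}

/-- The Big-M system (with bounds `ρ_L = 0`, `ρ_U = 1`): tuples `(ρ, y, z, x)` with
`ρ ≥ 0`, `ρ + Σ_e v_e y_e = 1`, `z ∈ R`, `z_{{i}} = x_i`, and
`max{0, z_e + ρ − 1} ≤ y_e ≤ min{ρ, z_e}` for all `e ∈ E`. -/
def bigMSystem (E : Finset (Finset (Fin N)))
    (hsing : ∀ i : Fin N, ({i} : Finset (Fin N)) ∈ E)
    (v : Finset (Fin N) → ℝ) (R : Set ({e // e ∈ E} → ℝ)) :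
    Set (ℝ × ({e // e ∈ E} → ℝ) × ({e // e ∈ E} → ℝ) × (Fin N → ℝ)) :=
  {p | 0 ≤ p.1 ∧ p.1 + ∑ e ∈ E.attach, v e.1 * p.2.1 e = 1 ∧
      p.2.2.1 ∈ R ∧ (∀ i : Fin N, p.2.2.1 ⟨{i}, hsing i⟩ = p.2.2.2 i) ∧
      ∀ e : {e // e ∈ E}, max 0 (p.2.2.1 e + p.1 - 1) ≤ p.2.1 e ∧
        p.2.1 e ≤ min p.1 (p.2.2.1 e)}


lemma prod_binary' {N : ℕ} {x : Fin N → ℝ} (hx : IsBinaryVec x) (e : Finset (Fin N)) :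
    (∏ i ∈ e, x i) = 0 ∨ (∏ i ∈ e, x i) = 1 := by
  by_cases h : ∃ i ∈ e, x i = 0
  · obtain ⟨i, hi, h0⟩ := h
    exact Or.inl (Finset.prod_eq_zero hi h0)
  · push_neg at h
    right
    apply Finset.prod_eq_one
    intro i hi
    rcases hx i with h0 | h1
    · exact absurd h0 (h i hi)
    · exact h1

lemma Dx_ge_one {N : ℕ} (E : Finset (Finset (Fin N))) (v : Finset (Fin N) → ℝ)
    (hv : ∀ e ∈ E, 0 < v e) {x : Fin N → ℝ} (hx : IsBinaryVec x) :
    1 ≤ Dx E v x := by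
  unfold Dx
  have : 0 ≤ ∑ c ∈ E, v c * ∏ i ∈ c, x i := by
    apply Finset.sum_nonneg
    intro c hc
    apply mul_nonneg (hv c hc).le
    rcases prod_binary' hx c with h | h <;> simp [h]
  linarith

/-- **Proposition 4.** If `R ⊆ [0,1]^E` is an exact relaxation oracle, then the projection
onto the `(ρ,y)`-coordinates of the tuples `(ρ,y,z,x)` in the Big-M system with binary `x`
equals the choice probability set `C_G`. -/
theorem bigM_formulation_exact
    (N : ℕ) (hN : 1 ≤ N)
    (E : Finset (Finset (Fin N)))
    (hne : ∀ e ∈ E, e.Nonempty)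
    (hsing : ∀ i : Fin N, ({i} : Finset (Fin N)) ∈ E)
    (v : Finset (Fin N) → ℝ) (hv : ∀ e ∈ E, 0 < v e)
    (R : Set ({e // e ∈ E} → ℝ))
    (hR : IsExactOracle E hsing R) :
    {p : ℝ × ({e // e ∈ E} → ℝ) |
        ∃ (z : {e // e ∈ E} → ℝ) (x : Fin N → ℝ),
          IsBinaryVec x ∧ (p.1, p.2, z, x) ∈ bigMSystem E hsing v R}
      = choiceSet E v := by
  ext p
  obtain ⟨ρ, y⟩ := p
  simp only [Set.mem_setOf_eq, choiceSet, bigMSystem]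
  constructor
  · rintro ⟨z, x, hx, hρ0, hsum, hzR, hzx, hbnd⟩
    refine ⟨x, hx, ?_⟩
    have hbin : ∀ i : Fin N, z ⟨{i}, hsing i⟩ = 0 ∨ z ⟨{i}, hsing i⟩ = 1 := by
      intro i; rw [hzx i]; exact hx i
    have hz : ∀ e : {e // e ∈ E}, z e = ∏ i ∈ e.1, x i := by
      intro e
      rw [hR.2.2 z hzR hbin e]
      exact Finset.prod_congr rfl fun i _ => by rw [hzx i]
    have hzb : ∀ e : {e // e ∈ E}, z e = 0 ∨ z e = 1 := by
      intro e; rw [hz e]; exact prod_binary' hx e.1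
    have hy : ∀ e : {e // e ∈ E}, y e = ρ * z e := by
      intro e
      obtain ⟨h1, h2⟩ := hbnd e
      rcases hzb e with h | h
      · rw [h, mul_zero]
        have ha := le_trans h2 (min_le_right ρ (z e))
        have hb := le_trans (le_max_left 0 (z e + ρ - 1)) h1
        rw [h] at ha
        linarith
      · rw [h, mul_one]
        have hl : ρ ≤ y e := by
          have := le_trans (le_max_right 0 (z e + ρ - 1)) h1
          rw [h] at this; linarith
        have hu := le_trans h2 (min_le_left _ _)
        linarith
    have hDD : ρ * Dx E v x = 1 := by
      rw [Dx, mul_add, mul_one, Finset.mul_sum]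
      rw [← Finset.sum_attach E (fun c => ρ * (v c * ∏ i ∈ c, x i))]
      calc ρ + ∑ e ∈ E.attach, ρ * (v e.1 * ∏ i ∈ e.1, x i)
          = ρ + ∑ e ∈ E.attach, v e.1 * y e := by
            congr 1
            apply Finset.sum_congr rfl
            intro e _
            rw [hy e, hz e]; ring
        _ = 1 := hsum
    have hDpos : (0:ℝ) < Dx E v x := lt_of_lt_of_le one_pos (Dx_ge_one E v hv hx)
    have hρ : ρ = 1 / Dx E v x := by
      field_simp
      linarith [hDD]
    refine ⟨hρ, fun e => ?_⟩
    rw [hy e, hz e, hρ]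
    field_simp
  · rintro ⟨x, hx, hρ, hy⟩
    refine ⟨fun e => ∏ i ∈ e.1, x i, x, hx, ?_, ?_, ?_, ?_, ?_⟩
    · have hDpos : (0:ℝ) < Dx E v x := lt_of_lt_of_le one_pos (Dx_ge_one E v hv hx)
      rw [hρ]
      exact div_nonneg one_pos.le hDpos.le
    · have hDpos : (0:ℝ) < Dx E v x := lt_of_lt_of_le one_pos (Dx_ge_one E v hv hx)
      have : ∑ e ∈ E.attach, v e.1 * y e
          = (∑ c ∈ E, v c * ∏ i ∈ c, x i) / Dx E v x := by
        rw [← Finset.sum_attach E (fun c => v c * ∏ i ∈ c, x i), Finset.sum_div]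
        exact Finset.sum_congr rfl fun e _ => by rw [hy e]; ring
      rw [this, hρ, ← add_div, div_eq_one_iff_eq hDpos.ne', Dx]
    · exact hR.2.1 ⟨x, hx, fun e => rfl⟩
    · intro i; simp
    · intro e
      have hDpos : (0:ℝ) < Dx E v x := lt_of_lt_of_le one_pos (Dx_ge_one E v hv hx)
      have hD1 : 1 ≤ Dx E v x := Dx_ge_one E v hv hx
      have hρpos : 0 < (ρ : ℝ) := by rw [hρ]; positivity
      have hρ1 : ρ ≤ 1 := by rw [hρ]; rw [div_le_one hDpos]; exact hD1
      have hye : y e = ρ * ∏ i ∈ e.1, x i := by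
        rw [hy e, hρ]; ring
      show max 0 ((∏ i ∈ e.1, x i) + ρ - 1) ≤ y e ∧ y e ≤ min ρ (∏ i ∈ e.1, x i)
      rcases prod_binary' hx e.1 with h | h
      · rw [hye, h, mul_zero]
        constructor
        · apply max_le le_rfl; linarith
        · exact le_min hρpos.le le_rfl
      · rw [hye, h, mul_one]
        constructor
        · apply max_le hρpos.le; linarith
        · exact le_min le_rfl hρ1
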